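/- In 16-QAM with the parity scheme, there is no codeword x ∈ A(1+i)^T (T ≥ 2) whose first symbol is a valid parity symbol: if all data symbols x_2,…,x_T lie in {±(1+i), ±(1−i)} then the parity bits computed from the data via p₂ = 1 + ∑ d_{2t} (mod 2) give p₂ = 1, forcing x₁ ∈ {1+3i, 3+3i}, hence x₁ ∉ A(1+i) = {1+i, −1+i, −1−i, 1−i}. -/

import Mathlib

/-- Bit-pair to 16-QAM level mapping of Table IV: `(11)↦1, (01)↦−1, (00)↦−3, (10)↦3`. -/
def bitLevel (b1 b2 : ZMod 2) : ℝ :=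
  if b2 = 1 then (if b1 = 1 then 1 else -1) else (if b1 = 1 then 3 else -3)

/-- Parity-bit pair to pilot-symbol mapping: `(00)↦1+i, (01)↦1+3i, (11)↦3+3i, (10)↦3+i`. -/
def paritySymbol (p1 p2 : ZMod 2) : ℂ :=
  if p1 = 0 ∧ p2 = 0 then 1 + Complex.I
  else if p1 = 0 ∧ p2 = 1 then 1 + 3 * Complex.I
  else if p1 = 1 ∧ p2 = 1 then 3 + 3 * Complex.I
  else 3 + Complex.I

/-- The associate class `A(1+i) = {1+i, −1+i, −1−i, 1−i}`. -/
def A1i : Set ℂ :=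
  {1 + Complex.I, -1 + Complex.I, -1 - Complex.I, 1 - Complex.I}

/-- Case 1 of Appendix B: for 16-QAM with the parity scheme, if all data
symbols `xD s` (for `s = 0,…,T-2`, i.e. symbols `x_2,…,x_T`) lie in `A(1+i)`, then the
parity bit `p₂ = 1 + ∑ d_{2t}` equals `1`, forcing the pilot symbol
`x₁ ∈ {1+3i, 3+3i}`, hence `x₁ ∉ A(1+i)`. -/
theorem stmt17 {T : ℕ} (hT : 2 ≤ T) (d : ℕ → ZMod 2)
    (xD : Fin (T - 1) → ℂ) (x1 : ℂ)
    (hmap : ∀ s : Fin (T - 1),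
      (xD s).re = bitLevel (d (4 * (s : ℕ) + 1)) (d (4 * (s : ℕ) + 2)) ∧
      (xD s).im = bitLevel (d (4 * (s : ℕ) + 3)) (d (4 * (s : ℕ) + 4)))
    (hA : ∀ s, xD s ∈ A1i)
    (p1 p2 : ZMod 2)
    (hp1 : p1 = 1 + ∑ t ∈ Finset.Icc 1 (4 * (T - 1)), d t)
    (hp2 : p2 = 1 + ∑ t ∈ Finset.Icc 1 (2 * (T - 1)), d (2 * t))
    (hx1 : x1 = paritySymbol p1 p2) :
    p2 = 1 ∧ x1 ∈ ({1 + 3 * Complex.I, 3 + 3 * Complex.I} : Set ℂ) ∧ x1 ∉ A1i := by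
  -- auxiliary: a level of ±1 forces the second bit to be 1
  have key : ∀ b1 b2 : ZMod 2, (bitLevel b1 b2 = 1 ∨ bitLevel b1 b2 = -1) → b2 = 1 := by
    intro b1 b2 h
    rcases (by decide : ∀ b : ZMod 2, b = 0 ∨ b = 1) b1 with rfl | rfl <;> rcases (by decide : ∀ b : ZMod 2, b = 0 ∨ b = 1) b2 with rfl | rfl <;> revert h <;> simp [bitLevel, show (0:ZMod 2) ≠ 1 by decide] <;> norm_num
  -- each data symbol has re, im ∈ {±1}
  have hd : ∀ s : Fin (T - 1), d (4 * (s : ℕ) + 2) = 1 ∧ d (4 * (s : ℕ) + 4) = 1 := by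
    intro s
    have hm := hmap s
    have hA' := hA s
    have hre : (xD s).re = 1 ∨ (xD s).re = -1 := by
      rcases hA' with h | h | h | h <;> rw [h] <;> simp [Complex.add_re, Complex.sub_re]
    have him : (xD s).im = 1 ∨ (xD s).im = -1 := by
      rcases hA' with h | h | h | h <;> rw [h] <;> simp [Complex.add_im, Complex.sub_im]
    constructor
    · exact key _ _ (by rw [← hm.1]; exact hre)
    · exact key _ _ (by rw [← hm.2]; exact him)
  -- every even-indexed bit d (2t), 1 ≤ t ≤ 2(T-1), equals 1
  have hall : ∀ t ∈ Finset.Icc 1 (2 * (T - 1)), d (2 * t) = 1 := by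
    intro t ht
    simp only [Finset.mem_Icc] at ht
    obtain ⟨ht1, ht2⟩ := ht
    rcases Nat.even_or_odd t with ⟨s, hs⟩ | ⟨s, hs⟩
    · -- t = 2(s') with s' ≥ 1; write t = 2*(s-1)+2, 2t = 4(s-1)+4
      have hs1 : 1 ≤ s := by omega
      have hslt : s - 1 < T - 1 := by omega
      have := (hd ⟨s - 1, hslt⟩).2
      have : d (4 * (s - 1) + 4) = 1 := this
      have harg : 2 * t = 4 * (s - 1) + 4 := by omega
      rw [harg]; exact this
    · -- t = 2s+1, 2t = 4s+2
      have hslt : s < T - 1 := by omega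
      have := (hd ⟨s, hslt⟩).1
      have harg : 2 * t = 4 * s + 2 := by omega
      rw [harg]; exact this
  have hsum : ∑ t ∈ Finset.Icc 1 (2 * (T - 1)), d (2 * t) = 0 := by
    rw [Finset.sum_congr rfl hall, Finset.sum_const, Nat.card_Icc, Nat.add_sub_cancel,
      nsmul_eq_mul, mul_one, Nat.cast_mul, ZMod.natCast_self, zero_mul]
  have hp2' : p2 = 1 := by rw [hp2, hsum, add_zero]
  refine ⟨hp2', ?_, ?_⟩
  · rw [hx1, hp2']
    by_cases h1 : p1 = 0
    · simp [paritySymbol, h1]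
    · have h1' : p1 = 1 := (by decide : ∀ b : ZMod 2, ¬b = 0 → b = 1) p1 h1
      simp [paritySymbol, h1']
  · rw [hx1, hp2']
    by_cases h1 : p1 = 0
    · simp only [paritySymbol, h1, and_true, if_true, if_neg (by norm_num : ¬((0:ZMod 2) = 0 ∧ (1:ZMod 2) = 0)), if_pos (⟨rfl, rfl⟩ : (0:ZMod 2) = 0 ∧ (1:ZMod 2) = 1)]
      intro h
      rcases h with h | h | h | h <;>
        · have := congrArg Complex.im h
          simp [Complex.add_im, Complex.sub_im] at this <;> norm_num at this
    · have h1' : p1 = 1 := (by decide : ∀ b : ZMod 2, ¬b = 0 → b = 1) p1 h1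
      subst h1'
      simp only [paritySymbol]
      norm_num
      intro h
      rcases h with h | h | h | h <;>
        · have := congrArg Complex.im h
          simp [Complex.add_im, Complex.sub_im] at this <;> norm_num at this
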